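/- Let R = ℂ[x₁,…,xₙ] and S = ℂ[z, x₁,…,xₙ], and let f ∈ R be homogeneous of degree d. Set F = (f − zᵈ)·z ∈ S. Then as a graded R-module, S/Jac(F) is free over R on the cosets of z⁰, z¹, …, z^{d−1}, and the R-annihilator of the coset of zⁱ (1 ≤ i ≤ d−1) is Jac(f), while the R-annihilator of the coset of z⁰ = 1 is f·Jac(f). -/

import Mathlib

open scoped BigOperators
open Polynomial

/-- The Jacobian ideal of `F = (f − zᵈ)·z ∈ S = R[z]`, generated by `∂F/∂z` together
with the `∂F/∂xᵢ = z·∂f/∂xᵢ`. -/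
noncomputable def jacF {n : ℕ} (f : MvPolynomial (Fin n) ℂ) :
    Ideal (Polynomial (MvPolynomial (Fin n) ℂ)) :=
  Ideal.span ({Polynomial.derivative
      ((Polynomial.C f - Polynomial.X ^ (f.totalDegree)) * Polynomial.X)} ∪
    Set.range fun i : Fin n => Polynomial.X * Polynomial.C (MvPolynomial.pderiv i f))

/-- The Jacobian ideal of `f ∈ R = ℂ[x₁,…,xₙ]`. -/
noncomputable def jacf {n : ℕ} (f : MvPolynomial (Fin n) ℂ) :
    Ideal (MvPolynomial (Fin n) ℂ) :=
  Ideal.span (Set.range fun i : Fin n => MvPolynomial.pderiv i f)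

/-! ### Auxiliary material: Euler's identity -/

open MvPolynomial in
private lemma aux_euler_monomial {n : ℕ} (u : Fin n →₀ ℕ) (c : ℂ) :
    ∑ i : Fin n, X i * pderiv i (monomial u c) =
      ((u.degree : ℂ)) • monomial u c := by
  have key : ∀ i : Fin n, X i * pderiv i (monomial u c) =
      ((u i : ℂ)) • monomial u c := by
    intro i
    rw [pderiv_monomial]
    rcases Nat.eq_zero_or_pos (u i) with h | h
    · simp [h]
    · have h2 : Finsupp.single i 1 + (u - Finsupp.single i 1) = u := by
        rw [add_comm, tsub_add_cancel_of_le]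
        simpa [Finsupp.single_le_iff] using Nat.one_le_iff_ne_zero.mpr h.ne'
      rw [← pow_one (X i), ← monomial_single_add, h2, MvPolynomial.smul_monomial,
        smul_eq_mul, mul_comm]
  rw [Finset.sum_congr rfl fun i _ => key i, ← Finset.sum_smul]
  congr 1
  rw [Finsupp.degree_apply, ← Nat.cast_sum,
    Finset.sum_subset (Finset.subset_univ u.support)
      (fun x _ hx => Finsupp.notMem_support_iff.mp hx)]

open MvPolynomial in
private lemma aux_euler {n d : ℕ} (f : MvPolynomial (Fin n) ℂ) (hf : f.IsHomogeneous d) :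
    ∑ i : Fin n, X i * pderiv i f = ((d : ℂ)) • f := by
  conv_lhs => rw [← f.support_sum_monomial_coeff]
  conv_rhs => rw [← f.support_sum_monomial_coeff]
  rw [Finset.smul_sum]
  simp only [map_sum, Finset.mul_sum]
  rw [Finset.sum_comm]
  refine Finset.sum_congr rfl fun u hu => ?_
  rw [aux_euler_monomial]
  congr 2
  rw [Finsupp.degree_eq_weight_one]
  exact hf (mem_support_iff.mp hu)

open MvPolynomial in
private lemma aux_f_mem_jacf {n d : ℕ} (hd : 0 < d) (f : MvPolynomial (Fin n) ℂ)
    (hf : f.IsHomogeneous d) : f ∈ jacf f := by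
  have h := aux_euler f hf
  have hdne : (d : ℂ) ≠ 0 := Nat.cast_ne_zero.mpr hd.ne'
  have heq : f = (d : ℂ)⁻¹ • ∑ i : Fin n, X i * pderiv i f := by
    rw [h, smul_smul, inv_mul_cancel₀ hdne, one_smul]
  have hm : MvPolynomial.C (d:ℂ)⁻¹ * (∑ i : Fin n, X i * pderiv i f) ∈ jacf f := by
    apply Ideal.mul_mem_left
    apply Ideal.sum_mem
    intro i _
    apply Ideal.mul_mem_left
    exact Ideal.subset_span (Set.mem_range_self i)
  rwa [← MvPolynomial.smul_eq_C_mul, ← heq] at hm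

section Aux

variable {n d : ℕ} (f : MvPolynomial (Fin n) ℂ)

local notation "R" => MvPolynomial (Fin n) ℂ

/-- The expected annihilator of the coset of `z^k`. -/
private noncomputable def JJ (k : ℕ) : Ideal (MvPolynomial (Fin n) ℂ) :=
  if k = 0 then Ideal.span {f} * jacf f else jacf f

/-- Correction coefficient appearing in the `z⁰`-coefficient functional. -/
private noncomputable def ww (d : ℕ) (k : ℕ) : MvPolynomial (Fin n) ℂ :=
  if k = 0 then MvPolynomial.C (((d:ℂ)+1)⁻¹) * f else 0

private lemma aux_cu :
    MvPolynomial.C (((d:ℂ)+1)⁻¹) * ((d : R) + 1) = 1 := by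
  have h : ((d : R) + 1) = MvPolynomial.C ((d:ℂ)+1) := by
    rw [map_add, map_natCast, map_one]
  rw [h, ← map_mul, inv_mul_cancel₀ (Nat.cast_add_one_ne_zero d), map_one]

private lemma aux_g0_eq (hd : 0 < d) (hdeg : f.totalDegree = d) :
    Polynomial.derivative ((Polynomial.C f - Polynomial.X ^ (f.totalDegree)) * Polynomial.X)
      = Polynomial.C f - Polynomial.C ((d : R) + 1) * Polynomial.X ^ d := by
  rw [hdeg]
  obtain ⟨e, rfl⟩ : ∃ e, d = e + 1 := ⟨d - 1, (Nat.succ_pred_eq_of_pos hd).symm⟩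
  simp only [derivative_mul, derivative_sub, derivative_C, derivative_X_pow, derivative_X,
    derivative_one, mul_one, zero_sub, map_add, map_natCast, map_one]
  push_cast
  ring

private lemma aux_g0_mem (hd : 0 < d) (hdeg : f.totalDegree = d) :
    Polynomial.C f - Polynomial.C ((d : R) + 1) * Polynomial.X ^ d ∈ jacF f := by
  rw [← aux_g0_eq f hd hdeg]
  exact Ideal.subset_span (Set.mem_union_left _ rfl)

/-- `X · C s ∈ Jac F` for every `s` in the Jacobian ideal of `f`. -/
private lemma aux_XCs_mem {s : MvPolynomial (Fin n) ℂ} (hs : s ∈ jacf f) :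
    Polynomial.X * Polynomial.C s ∈ jacF f := by
  induction hs using Submodule.span_induction with
  | mem x hx =>
    obtain ⟨i, rfl⟩ := hx
    exact Ideal.subset_span (Set.mem_union_right _ (Set.mem_range_self i))
  | zero => simp
  | add x y hx hy ihx ihy =>
    rw [map_add, mul_add]; exact Ideal.add_mem _ ihx ihy
  | smul a x hx ihx =>
    have h : Polynomial.X * Polynomial.C (a • x)
        = Polynomial.C a * (Polynomial.X * Polynomial.C x) := by
      rw [smul_eq_mul, map_mul]; ring
    rw [h]
    exact Ideal.mul_mem_left _ _ ihx

private lemma aux_CsXk_mem {s : MvPolynomial (Fin n) ℂ} (hs : s ∈ jacf f)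
    {k : ℕ} (hk : 0 < k) : Polynomial.C s * Polynomial.X ^ k ∈ jacF f := by
  obtain ⟨e, rfl⟩ : ∃ e, k = e + 1 := ⟨k - 1, (Nat.succ_pred_eq_of_pos hk).symm⟩
  have h : Polynomial.C s * Polynomial.X ^ (e + 1)
      = (Polynomial.X * Polynomial.C s) * Polynomial.X ^ e := by ring
  rw [h]
  exact Ideal.mul_mem_right _ _ (aux_XCs_mem f hs)

private lemma aux_CfCs_mem (hd : 0 < d) (hdeg : f.totalDegree = d)
    {s : MvPolynomial (Fin n) ℂ} (hs : s ∈ jacf f) :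
    Polynomial.C f * Polynomial.C s ∈ jacF f := by
  have hsplit : Polynomial.C f * Polynomial.C s
      = (Polynomial.C f - Polynomial.C ((d : R) + 1) * Polynomial.X ^ d) * Polynomial.C s
        + Polynomial.C ((d : R) + 1) * (Polynomial.C s * Polynomial.X ^ d) := by ring
  rw [hsplit]
  exact Ideal.add_mem _ (Ideal.mul_mem_right _ _ (aux_g0_mem f hd hdeg))
    (Ideal.mul_mem_left _ _ (aux_CsXk_mem f hs hd))

/-- Backward direction: elements of the expected annihilator do annihilate. -/
private lemma aux_backward (hd : 0 < d) (hdeg : f.totalDegree = d)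
    {k : ℕ} {r : MvPolynomial (Fin n) ℂ} (hr : r ∈ JJ f k) :
    Polynomial.C r * Polynomial.X ^ k ∈ jacF f := by
  rcases Nat.eq_zero_or_pos k with rfl | hk
  · rw [JJ, if_pos rfl] at hr
    rw [pow_zero, mul_one]
    have hle : Ideal.span {f} * jacf f ≤ Ideal.comap
        (Polynomial.C : MvPolynomial (Fin n) ℂ →+* Polynomial (MvPolynomial (Fin n) ℂ))
        (jacF f) := by
      rw [Ideal.mul_le]
      intro a ha s hs
      obtain ⟨t, rfl⟩ := Ideal.mem_span_singleton'.mp ha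
      rw [Ideal.mem_comap, map_mul, map_mul, mul_assoc]
      exact Ideal.mul_mem_left _ _ (aux_CfCs_mem f hd hdeg hs)
    exact Ideal.mem_comap.mp (hle hr)
  · rw [JJ, if_neg hk.ne'] at hr
    exact aux_CsXk_mem f hr hk

/-- `X^(d+1) ∈ Jac F`. -/
private lemma aux_Xd1_mem (hd : 0 < d) (hdeg : f.totalDegree = d)
    (hf : f.IsHomogeneous d) :
    (Polynomial.X : Polynomial (MvPolynomial (Fin n) ℂ)) ^ (d + 1) ∈ jacF f := by
  have hcu : Polynomial.C (MvPolynomial.C (((d:ℂ)+1)⁻¹)) * Polynomial.C ((d : R) + 1)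
      = (1 : Polynomial (MvPolynomial (Fin n) ℂ)) := by
    rw [← map_mul, aux_cu, map_one]
  have hsplit : (Polynomial.X : Polynomial (MvPolynomial (Fin n) ℂ)) ^ (d + 1)
      = Polynomial.C (MvPolynomial.C (((d:ℂ)+1)⁻¹)) *
          ((Polynomial.C ((d : R) + 1) * Polynomial.X ^ d - Polynomial.C f) * Polynomial.X
            + (Polynomial.X * Polynomial.C f) * 1) := by
    linear_combination (-(Polynomial.X ^ d * Polynomial.X)) * hcu
  rw [hsplit]
  refine Ideal.mul_mem_left _ _ (Ideal.add_mem _ ?_ ?_)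
  · have h : (Polynomial.C ((d : R) + 1) * Polynomial.X ^ d - Polynomial.C f)
        = -(Polynomial.C f - Polynomial.C ((d : R) + 1) * Polynomial.X ^ d) := by ring
    rw [h]
    exact Ideal.mul_mem_right _ _ (neg_mem (aux_g0_mem f hd hdeg))
  · exact Ideal.mul_mem_right _ _ (aux_XCs_mem f (aux_f_mem_jacf hd f hf))

/-- Scalar action of `R` on the quotient. -/
private lemma aux_smul_mk (r : MvPolynomial (Fin n) ℂ)
    (p : Polynomial (MvPolynomial (Fin n) ℂ)) :
    r • Ideal.Quotient.mk (jacF f) p = Ideal.Quotient.mk (jacF f) (Polynomial.C r * p) := by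
  have h1 : r • Ideal.Quotient.mk (jacF f) p = Ideal.Quotient.mk (jacF f) (r • p) := rfl
  rw [h1, Polynomial.smul_eq_C_mul]

/-- The canonical projection as an `R`-linear map. -/
private noncomputable def mkL :
    Polynomial (MvPolynomial (Fin n) ℂ) →ₗ[MvPolynomial (Fin n) ℂ]
      (Polynomial (MvPolynomial (Fin n) ℂ) ⧸ jacF f) where
  toFun := Ideal.Quotient.mk (jacF f)
  map_add' x y := map_add _ x y
  map_smul' r p := by
    rw [RingHom.id_apply, Polynomial.smul_eq_C_mul, aux_smul_mk]

private lemma mkL_apply (p : Polynomial (MvPolynomial (Fin n) ℂ)) :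
    mkL f p = Ideal.Quotient.mk (jacF f) p := rfl

/-- Key forward lemma: the relevant coefficient combination of any element
of `Jac F` lies in the expected annihilator ideal. -/
private lemma aux_coeff_mem (hd : 0 < d) (hdeg : f.totalDegree = d) (hf : f.IsHomogeneous d)
    {k : ℕ} (hk : k < d) {p : Polynomial (MvPolynomial (Fin n) ℂ)} (hp : p ∈ jacF f) :
    p.coeff k + ww f d k * p.coeff d ∈ JJ f k := by
  classical
  set Q : Polynomial (MvPolynomial (Fin n) ℂ) → Prop :=
    fun q => q.coeff k + ww f d k * q.coeff d ∈ JJ f k with hQ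
  have Qzero : Q 0 := by simp [hQ]
  have Qadd : ∀ q r, Q q → Q r → Q (q + r) := by
    intro q r hq hr
    have h : (q + r).coeff k + ww f d k * (q + r).coeff d
        = (q.coeff k + ww f d k * q.coeff d) + (r.coeff k + ww f d k * r.coeff d) := by
      simp only [Polynomial.coeff_add]; ring
    simp only [hQ] at *
    rw [h]
    exact Ideal.add_mem _ hq hr
  have QCmul : ∀ (b : MvPolynomial (Fin n) ℂ) q, Q q → Q (Polynomial.C b * q) := by
    intro b q hq
    have h : (Polynomial.C b * q).coeff k + ww f d k * (Polynomial.C b * q).coeff d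
        = b * (q.coeff k + ww f d k * q.coeff d) := by
      simp only [Polynomial.coeff_C_mul]; ring
    simp only [hQ] at *
    rw [h]
    exact Ideal.mul_mem_left _ _ hq
  have hfJ : f ∈ jacf f := aux_f_mem_jacf hd f hf
  have hmm : f * (MvPolynomial.C (((d:ℂ)+1)⁻¹) * f) ∈ Ideal.span {f} * jacf f :=
    Ideal.mul_mem_mul (Ideal.mem_span_singleton_self f) (Ideal.mul_mem_left _ _ hfJ)
  have hgen1 : ∀ m : ℕ,
      Q ((Polynomial.C f - Polynomial.C ((d : R) + 1) * Polynomial.X ^ d)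
          * Polynomial.X ^ m) := by
    intro m
    have hexp : (Polynomial.C f - Polynomial.C ((d : R) + 1) * Polynomial.X ^ d)
          * Polynomial.X ^ m
        = Polynomial.C f * Polynomial.X ^ m
          - Polynomial.C ((d : R) + 1) * Polynomial.X ^ (d + m) := by
      rw [pow_add]; ring
    simp only [hQ, hexp, Polynomial.coeff_sub, Polynomial.coeff_C_mul, Polynomial.coeff_X_pow]
    rcases Nat.eq_zero_or_pos k with rfl | hk1
    · simp only [JJ, ww, if_pos rfl, if_true]
      by_cases hm0 : m = 0
      · subst hm0
        rw [if_pos (rfl : (0:ℕ) = 0), if_neg (by omega : ¬ (0:ℕ) = d + 0),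
          if_neg (by omega : ¬ d = 0), if_pos (by omega : d = d + 0)]
        have hz : ((f * 1) - ((d : MvPolynomial (Fin n) ℂ) + 1) * 0)
            + MvPolynomial.C (((d:ℂ)+1)⁻¹) * f
              * ((f * 0) - ((d : MvPolynomial (Fin n) ℂ) + 1) * 1) = 0 := by
          linear_combination (-f) * (aux_cu (n := n) (d := d))
        rw [hz]
        exact Submodule.zero_mem _
      · by_cases hmd : d = m
        · rw [if_neg (by omega : ¬ (0:ℕ) = m), if_neg (by omega : ¬ (0:ℕ) = d + m),
            if_pos hmd, if_neg (by omega : ¬ d = d + m)]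
          have hre : ((f * 0) - ((d : MvPolynomial (Fin n) ℂ) + 1) * 0)
              + MvPolynomial.C (((d:ℂ)+1)⁻¹) * f
                * ((f * 1) - ((d : MvPolynomial (Fin n) ℂ) + 1) * 0)
              = f * (MvPolynomial.C (((d:ℂ)+1)⁻¹) * f) := by ring
          rw [hre]
          exact hmm
        · rw [if_neg (by omega : ¬ (0:ℕ) = m), if_neg (by omega : ¬ (0:ℕ) = d + m),
            if_neg hmd, if_neg (by omega : ¬ d = d + m)]
          have hz : ((f * 0) - ((d : MvPolynomial (Fin n) ℂ) + 1) * 0)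
              + MvPolynomial.C (((d:ℂ)+1)⁻¹) * f
                * ((f * 0) - ((d : MvPolynomial (Fin n) ℂ) + 1) * 0) = 0 := by ring
          rw [hz]
          exact Submodule.zero_mem _
    · simp only [JJ, ww, if_neg hk1.ne', zero_mul, add_zero]
      rw [if_neg (by omega : ¬ k = d + m)]
      by_cases hm : k = m
      · rw [if_pos hm]
        have hre : f * 1 - ((d : MvPolynomial (Fin n) ℂ) + 1) * 0 = f := by ring
        rw [hre]
        exact hfJ
      · rw [if_neg hm]
        have hz : f * 0 - ((d : MvPolynomial (Fin n) ℂ) + 1) * 0 = 0 := by ring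
        rw [hz]
        exact Submodule.zero_mem _
  have hgen2 : ∀ (i : Fin n) (m : ℕ),
      Q ((Polynomial.X * Polynomial.C (MvPolynomial.pderiv i f)) * Polynomial.X ^ m) := by
    intro i m
    have hpdJ : MvPolynomial.pderiv i f ∈ jacf f :=
      Ideal.subset_span (Set.mem_range_self i)
    have hmm2 : f * (MvPolynomial.C (((d:ℂ)+1)⁻¹) * MvPolynomial.pderiv i f)
        ∈ Ideal.span {f} * jacf f :=
      Ideal.mul_mem_mul (Ideal.mem_span_singleton_self f) (Ideal.mul_mem_left _ _ hpdJ)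
    have hexp : (Polynomial.X * Polynomial.C (MvPolynomial.pderiv i f)) * Polynomial.X ^ m
        = Polynomial.C (MvPolynomial.pderiv i f) * Polynomial.X ^ (m + 1) := by
      rw [pow_succ]; ring
    simp only [hQ, hexp, Polynomial.coeff_C_mul, Polynomial.coeff_X_pow]
    rcases Nat.eq_zero_or_pos k with rfl | hk1
    · simp only [JJ, ww, if_pos rfl, if_true]
      rw [if_neg (by omega : ¬ (0:ℕ) = m + 1)]
      by_cases hdm : d = m + 1
      · rw [if_pos hdm]
        have hre : MvPolynomial.pderiv i f * 0
            + MvPolynomial.C (((d:ℂ)+1)⁻¹) * f * (MvPolynomial.pderiv i f * 1)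
            = f * (MvPolynomial.C (((d:ℂ)+1)⁻¹) * MvPolynomial.pderiv i f) := by ring
        rw [hre]
        exact hmm2
      · rw [if_neg hdm]
        have hz : MvPolynomial.pderiv i f * 0
            + MvPolynomial.C (((d:ℂ)+1)⁻¹) * f * (MvPolynomial.pderiv i f * 0) = 0 := by ring
        rw [hz]
        exact Submodule.zero_mem _
    · simp only [JJ, ww, if_neg hk1.ne', zero_mul, add_zero]
      by_cases hm : k = m + 1
      · rw [if_pos hm, mul_one]
        exact hpdJ
      · rw [if_neg hm, mul_zero]
        exact Submodule.zero_mem _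
  have main : ∀ m : ℕ, Q (p * Polynomial.X ^ m) := by
    induction hp using Submodule.span_induction with
    | mem x hx =>
      rcases hx with hx | ⟨i, rfl⟩
      · rw [Set.mem_singleton_iff] at hx
        subst hx
        intro m
        rw [aux_g0_eq f hd hdeg]
        exact hgen1 m
      · exact hgen2 i
    | zero => intro m; rw [zero_mul]; exact Qzero
    | add x y hx hy ihx ihy => intro m; rw [add_mul]; exact Qadd _ _ (ihx m) (ihy m)
    | smul a x hx ihx =>
      intro m
      induction a using Polynomial.induction_on' with
      | add u v hu hv =>
        have h : (u + v) • x * Polynomial.X ^ m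
            = u • x * Polynomial.X ^ m + v • x * Polynomial.X ^ m := by
          rw [smul_eq_mul, smul_eq_mul, smul_eq_mul]; ring
        rw [h]
        exact Qadd _ _ hu hv
      | monomial j b =>
        have h : (Polynomial.monomial j b) • x * Polynomial.X ^ m
            = Polynomial.C b * (x * Polynomial.X ^ (j + m)) := by
          rw [smul_eq_mul, ← Polynomial.C_mul_X_pow_eq_monomial, pow_add]; ring
        rw [h]
        exact QCmul b _ (ihx (j + m))
  have h0 := main 0
  rw [pow_zero, mul_one] at h0
  exact h0

/-- The annihilator computation, uniformly in `k < d`. -/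
private lemma aux_ann (hd : 0 < d) (hdeg : f.totalDegree = d) (hf : f.IsHomogeneous d)
    {k : ℕ} (hk : k < d) :
    (Submodule.span (MvPolynomial (Fin n) ℂ)
        {Ideal.Quotient.mk (jacF f) (Polynomial.X ^ k)}).annihilator = JJ f k := by
  ext r
  rw [Submodule.mem_annihilator_span_singleton, aux_smul_mk,
    Ideal.Quotient.eq_zero_iff_mem]
  constructor
  · intro h
    have h2 := aux_coeff_mem f hd hdeg hf hk h
    simp only [Polynomial.coeff_C_mul, Polynomial.coeff_X_pow, eq_self_iff_true, if_true,
      if_neg (show ¬ d = k by omega), mul_one, mul_zero, add_zero] at h2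
    exact h2
  · intro h
    exact aux_backward f hd hdeg h

end Aux

set_option maxHeartbeats 1000000 in
/-- For `f ∈ R = ℂ[x₁,…,xₙ]` homogeneous of degree `d > 0` and
`F = (f − zᵈ)z ∈ S = R[z]`, the quotient `S/Jac(F)` is the direct sum of the cyclic
`R`-modules generated by the cosets of `z⁰,…,z^{d−1}`; the `R`-annihilator of the
coset of `zⁱ` for `1 ≤ i ≤ d−1` is `Jac(f)`, and the `R`-annihilator of the coset of
`z⁰ = 1` is `f·Jac(f)`. -/
theorem stmt_9 {n d : ℕ} (hn : 2 ≤ n) (hd : 0 < d)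
    (f : MvPolynomial (Fin n) ℂ) (hf : f.IsHomogeneous d) (hdeg : f.totalDegree = d) :
    (⨆ i : Fin d, Submodule.span (MvPolynomial (Fin n) ℂ)
        {Ideal.Quotient.mk (jacF f) (Polynomial.X ^ (i : ℕ))}) = ⊤ ∧
    iSupIndep (fun i : Fin d => Submodule.span (MvPolynomial (Fin n) ℂ)
        {Ideal.Quotient.mk (jacF f) (Polynomial.X ^ (i : ℕ))}) ∧
    (∀ i : Fin d, 1 ≤ (i : ℕ) →
      (Submodule.span (MvPolynomial (Fin n) ℂ)
        {Ideal.Quotient.mk (jacF f) (Polynomial.X ^ (i : ℕ))}).annihilator = jacf f) ∧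
    (Submodule.span (MvPolynomial (Fin n) ℂ)
        {Ideal.Quotient.mk (jacF f) (1 : Polynomial (MvPolynomial (Fin n) ℂ))}).annihilator
      = Ideal.span {f} * jacf f := by
  classical
  have hcu : Polynomial.C (MvPolynomial.C (((d:ℂ)+1)⁻¹))
        * Polynomial.C ((d : MvPolynomial (Fin n) ℂ) + 1)
      = (1 : Polynomial (MvPolynomial (Fin n) ℂ)) := by
    rw [← map_mul, aux_cu, map_one]
  refine ⟨?_, ?_, ?_, ?_⟩
  · -- the cosets of X^0, …, X^(d-1) generate everything
    have hx1 : ∀ j : ℕ, Ideal.Quotient.mk (jacF f) (Polynomial.X ^ j) ∈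
        (⨆ i : Fin d, Submodule.span (MvPolynomial (Fin n) ℂ)
          {Ideal.Quotient.mk (jacF f) (Polynomial.X ^ (i : ℕ))}) := by
      intro j
      rcases lt_trichotomy j d with hj | rfl | hj
      · exact Submodule.mem_iSup_of_mem ⟨j, hj⟩ (Submodule.mem_span_singleton_self _)
      · have heq : (Polynomial.X : Polynomial (MvPolynomial (Fin n) ℂ)) ^ j
            - Polynomial.C (MvPolynomial.C (((j:ℂ)+1)⁻¹) * f) * Polynomial.X ^ (0:ℕ)
            = (-(Polynomial.C (MvPolynomial.C (((j:ℂ)+1)⁻¹)))) *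
                (Polynomial.C f
                  - Polynomial.C ((j : MvPolynomial (Fin n) ℂ) + 1) * Polynomial.X ^ j) := by
          rw [map_mul]
          linear_combination (-(Polynomial.X ^ j : Polynomial (MvPolynomial (Fin n) ℂ))) * hcu
        have h0 : Ideal.Quotient.mk (jacF f) (Polynomial.X ^ j)
            = (MvPolynomial.C (((j:ℂ)+1)⁻¹) * f) •
                Ideal.Quotient.mk (jacF f) (Polynomial.X ^ (0:ℕ)) := by
          rw [aux_smul_mk, Ideal.Quotient.mk_eq_mk_iff_sub_mem, heq]
          exact Ideal.mul_mem_left _ _ (aux_g0_mem f hd hdeg)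
        rw [h0]
        exact Submodule.smul_mem _ _
          (Submodule.mem_iSup_of_mem ⟨0, hd⟩ (Submodule.mem_span_singleton_self _))
      · have hmem : (Polynomial.X : Polynomial (MvPolynomial (Fin n) ℂ)) ^ j ∈ jacF f := by
          obtain ⟨e, rfl⟩ : ∃ e, j = (d + 1) + e := ⟨j - (d + 1), by omega⟩
          rw [pow_add]
          exact Ideal.mul_mem_right _ _ (aux_Xd1_mem f hd hdeg hf)
        rw [Ideal.Quotient.eq_zero_iff_mem.mpr hmem]
        exact Submodule.zero_mem _
    rw [eq_top_iff]
    rintro x -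
    obtain ⟨p, rfl⟩ := Ideal.Quotient.mk_surjective x
    induction p using Polynomial.induction_on' with
    | add p q hp hq => rw [map_add]; exact Submodule.add_mem _ hp hq
    | monomial j b =>
      rw [← Polynomial.C_mul_X_pow_eq_monomial, ← aux_smul_mk]
      exact Submodule.smul_mem _ _ (hx1 j)
  · -- independence
    rw [iSupIndep_def]
    intro i
    rw [Submodule.disjoint_def]
    intro x hxi hxo
    obtain ⟨r, rfl⟩ := Submodule.mem_span_singleton.mp hxi
    set U : Submodule (MvPolynomial (Fin n) ℂ) (Polynomial (MvPolynomial (Fin n) ℂ)) :=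
      LinearMap.ker (Polynomial.lcoeff (MvPolynomial (Fin n) ℂ) (i : ℕ)) ⊓
        LinearMap.ker (Polynomial.lcoeff (MvPolynomial (Fin n) ℂ) d) with hU
    have hW : (⨆ (j : Fin d) (_ : j ≠ i), Submodule.span (MvPolynomial (Fin n) ℂ)
          {Ideal.Quotient.mk (jacF f) (Polynomial.X ^ (j : ℕ))})
        ≤ Submodule.map (mkL f) U := by
      refine iSup₂_le fun j hj => ?_
      rw [Submodule.span_le, Set.singleton_subset_iff]
      refine ⟨Polynomial.X ^ (j : ℕ), ?_, rfl⟩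
      simp only [hU, SetLike.mem_coe, Submodule.mem_inf, LinearMap.mem_ker,
        Polynomial.lcoeff_apply, Polynomial.coeff_X_pow]
      constructor
      · rw [if_neg]
        intro hij
        exact hj (Fin.ext (by omega))
      · rw [if_neg (by omega : ¬ d = (j:ℕ))]
    obtain ⟨q, hqU, hq⟩ := hW hxo
    simp only [hU, SetLike.mem_coe, Submodule.mem_inf, LinearMap.mem_ker,
      Polynomial.lcoeff_apply] at hqU
    have hsub : Polynomial.C r * Polynomial.X ^ (i : ℕ) - q ∈ jacF f := by
      rw [← Ideal.Quotient.mk_eq_mk_iff_sub_mem, ← aux_smul_mk, ← hq]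
      rfl
    have h2 := aux_coeff_mem f hd hdeg hf i.isLt hsub
    simp only [Polynomial.coeff_sub, Polynomial.coeff_C_mul, Polynomial.coeff_X_pow,
      hqU.1, hqU.2, eq_self_iff_true, if_true, if_neg (show ¬ d = (i:ℕ) by omega),
      mul_one, mul_zero, sub_zero, add_zero] at h2
    rw [aux_smul_mk]
    exact Ideal.Quotient.eq_zero_iff_mem.mpr (aux_backward f hd hdeg h2)
  · -- annihilators of X^i, 1 ≤ i
    intro i hi
    rw [aux_ann f hd hdeg hf i.isLt, JJ, if_neg (by omega)]
  · -- annihilator of 1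
    have h := aux_ann f hd hdeg hf hd (k := 0)
    rw [pow_zero] at h
    rw [h, JJ, if_pos rfl]
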